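/- The quaternion algebra ℍ[ℚ₃, −6, 2] over the field ℚ₃ of 3-adic numbers, with i² = −6, j² = 2, ij = −ji, is a division ring. -/

import Mathlib

open Quaternion

-- residue lemma in ℤ_[3]
lemma key_int (z : ℤ_[3]) : ‖z ^ 2 - 2‖ = 1 := by
  rcases lt_or_eq_of_le (PadicInt.norm_le_one (z ^ 2 - 2)) with h | h
  · exfalso
    rw [PadicInt.norm_lt_one_iff_dvd] at h
    have h2 : (PadicInt.toZMod (z ^ 2 - 2) : ZMod 3) = 0 := by
      have := PadicInt.ker_toZMod (p := 3)
      have hmem : z ^ 2 - 2 ∈ IsLocalRing.maximalIdeal ℤ_[3] := by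
        rw [PadicInt.maximalIdeal_eq_span_p, Ideal.mem_span_singleton]; exact h
      rw [← this] at hmem
      exact hmem
    rw [map_sub, map_pow, map_ofNat] at h2
    revert h2
    generalize PadicInt.toZMod z = w
    revert w; decide
  · exact h

lemma norm_two_q3 : ‖(2 : ℚ_[3])‖ = 1 := by
  have h := key_int (0 : ℤ_[3])
  have : ((0 : ℤ_[3]) ^ 2 - 2 : ℤ_[3]) = -2 := by ring
  rw [this] at h
  have h2 : ‖((-2 : ℤ_[3]) : ℚ_[3])‖ = 1 := h
  push_cast at h2
  rw [← norm_neg]; exact_mod_cast h2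

lemma key_q (t : ℚ_[3]) (h : ‖t‖ ≤ 1) : ‖t ^ 2 - 2‖ = 1 := by
  set z : ℤ_[3] := ⟨t, h⟩ with hz
  have h2 : ‖((z ^ 2 - 2 : ℤ_[3]) : ℚ_[3])‖ = 1 := key_int z
  push_cast at h2
  exact h2

lemma lemM (u v : ℚ_[3]) : ‖u ^ 2 - 2 * v ^ 2‖ = max ‖u‖ ‖v‖ ^ 2 := by
  rcases eq_or_ne ‖u‖ ‖v‖ with h | h
  · by_cases hv : v = 0
    · have hu : u = 0 := by
        rw [hv, norm_zero] at h; exact norm_eq_zero.mp h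
      simp [hu, hv]
    · have hrw : u ^ 2 - 2 * v ^ 2 = v ^ 2 * ((u / v) ^ 2 - 2) := by
        field_simp
      have hle : ‖u / v‖ ≤ 1 := by
        rw [norm_div, h, div_self (norm_ne_zero_iff.mpr hv)]
      rw [hrw, norm_mul, norm_pow, key_q _ hle, mul_one, h, max_self]
  · have h2 : ‖u ^ 2‖ ≠ ‖-(2 * v ^ 2)‖ := by
      rw [norm_neg, norm_mul, norm_pow, norm_pow, norm_two_q3, one_mul]
      intro hc
      exact h (by nlinarith [norm_nonneg u, norm_nonneg v])
    have := Padic.add_eq_max_of_ne h2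
    rw [← sub_eq_add_neg] at this
    rw [this, norm_neg, norm_mul, norm_pow, norm_pow, norm_two_q3, one_mul]
    rcases le_total ‖u‖ ‖v‖ with hle | hle
    · rw [max_eq_right hle, max_eq_right (by nlinarith [norm_nonneg u])]
    · rw [max_eq_left hle, max_eq_left (by nlinarith [norm_nonneg v])]

lemma max_zpow (u v : ℚ_[3]) (h : max ‖u‖ ‖v‖ ≠ 0) : ∃ m : ℤ, max ‖u‖ ‖v‖ = (3 : ℝ) ^ m := by
  rcases max_cases ‖u‖ ‖v‖ with ⟨he, _⟩ | ⟨he, _⟩ <;> rw [he] at h ⊢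
  · exact ⟨-u.valuation, by exact_mod_cast Padic.norm_eq_zpow_neg_valuation (norm_ne_zero_iff.mp h)⟩
  · exact ⟨-v.valuation, by exact_mod_cast Padic.norm_eq_zpow_neg_valuation (norm_ne_zero_iff.mp h)⟩

lemma norm_six_q3 : ‖(6 : ℚ_[3])‖ = (3 : ℝ)⁻¹ := by
  have h3 : ‖(3 : ℚ_[3])‖ = (3 : ℝ)⁻¹ := by
    simpa using Padic.norm_p (p := 3)
  have : (6 : ℚ_[3]) = 2 * 3 := by norm_num
  rw [this, norm_mul, norm_two_q3, one_mul, h3]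

lemma aniso (a b c d : ℚ_[3]) (h : ¬(a = 0 ∧ b = 0 ∧ c = 0 ∧ d = 0)) :
    a ^ 2 + 6 * b ^ 2 - 2 * c ^ 2 - 12 * d ^ 2 ≠ 0 := by
  intro hN
  have hsplit : a ^ 2 - 2 * c ^ 2 = -(6 * (b ^ 2 - 2 * d ^ 2)) := by linear_combination hN
  have h1 : ‖a ^ 2 - 2 * c ^ 2‖ = max ‖a‖ ‖c‖ ^ 2 := lemM a c
  have h2 : ‖b ^ 2 - 2 * d ^ 2‖ = max ‖b‖ ‖d‖ ^ 2 := lemM b d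
  have heq : max ‖a‖ ‖c‖ ^ 2 = (3 : ℝ)⁻¹ * max ‖b‖ ‖d‖ ^ 2 := by
    rw [← h1, ← h2, hsplit, norm_neg, norm_mul, norm_six_q3]
  by_cases hbd : max ‖b‖ ‖d‖ = 0
  · rw [hbd] at heq
    norm_num at heq
    have hac : max ‖a‖ ‖c‖ = 0 := heq
    have ha : ‖a‖ = 0 := le_antisymm (hac ▸ le_max_left _ _) (norm_nonneg _)
    have hc : ‖c‖ = 0 := le_antisymm (hac ▸ le_max_right _ _) (norm_nonneg _)
    have hb : ‖b‖ = 0 := le_antisymm (hbd ▸ le_max_left _ _) (norm_nonneg _)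
    have hd : ‖d‖ = 0 := le_antisymm (hbd ▸ le_max_right _ _) (norm_nonneg _)
    exact h ⟨norm_eq_zero.mp ha, norm_eq_zero.mp hb, norm_eq_zero.mp hc, norm_eq_zero.mp hd⟩
  · have hac : max ‖a‖ ‖c‖ ≠ 0 := by
      intro h0
      rw [h0] at heq
      have h2' : max ‖b‖ ‖d‖ ^ 2 = 0 := by nlinarith [sq_nonneg (max ‖b‖ ‖d‖)]
      exact hbd (pow_eq_zero_iff (two_ne_zero) |>.mp h2')
    obtain ⟨m, hm⟩ := max_zpow a c hac
    obtain ⟨n, hn⟩ := max_zpow b d hbd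
    rw [hm, hn] at heq
    have e1 : ((3:ℝ) ^ m) ^ (2:ℕ) = (3:ℝ) ^ (m * 2) := by
      rw [← zpow_natCast ((3:ℝ)^m) 2, ← zpow_mul]; norm_num
    have e2 : ((3:ℝ) ^ n) ^ (2:ℕ) = (3:ℝ) ^ (n * 2) := by
      rw [← zpow_natCast ((3:ℝ)^n) 2, ← zpow_mul]; norm_num
    rw [e1, e2] at heq
    have hre : (3:ℝ) ^ (m * 2) = (3:ℝ) ^ (n * 2 - 1) := by
      rw [heq, zpow_sub₀ (by norm_num : (3:ℝ) ≠ 0), zpow_one]; ring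
    have := zpow_right_injective₀ (by norm_num : (0:ℝ) < 3) (by norm_num : (3:ℝ) ≠ 1) hre
    omega

/-- The quaternion algebra `(−6, 2 / ℚ₃)` over the 3-adic numbers is a division ring:
every nonzero element is invertible. -/
theorem stmt_6 :
    ∀ x : ℍ[ℚ_[3], -6, 2], x ≠ 0 → ∃ y : ℍ[ℚ_[3], -6, 2], x * y = 1 ∧ y * x = 1 := by
  intro x hx
  set N : ℚ_[3] := x.re ^ 2 + 6 * x.imI ^ 2 - 2 * x.imJ ^ 2 - 12 * x.imK ^ 2 with hNdef
  have hN : N ≠ 0 := by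
    apply aniso
    rintro ⟨h1, h2, h3, h4⟩
    exact hx (QuaternionAlgebra.ext h1 h2 h3 h4)
  have hmul : x * star x = (N : ℍ[ℚ_[3], -6, 2]) := by
    ext <;>
      simp only [QuaternionAlgebra.re_mul, QuaternionAlgebra.imI_mul, QuaternionAlgebra.imJ_mul,
        QuaternionAlgebra.imK_mul, QuaternionAlgebra.re_star, QuaternionAlgebra.imI_star,
        QuaternionAlgebra.imJ_star, QuaternionAlgebra.imK_star, QuaternionAlgebra.re_coe,
        QuaternionAlgebra.imI_coe, QuaternionAlgebra.imJ_coe, QuaternionAlgebra.imK_coe,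
        hNdef] <;>
      ring
  have hmul' : star x * x = (N : ℍ[ℚ_[3], -6, 2]) := by
    ext <;>
      simp only [QuaternionAlgebra.re_mul, QuaternionAlgebra.imI_mul, QuaternionAlgebra.imJ_mul,
        QuaternionAlgebra.imK_mul, QuaternionAlgebra.re_star, QuaternionAlgebra.imI_star,
        QuaternionAlgebra.imJ_star, QuaternionAlgebra.imK_star, QuaternionAlgebra.re_coe,
        QuaternionAlgebra.imI_coe, QuaternionAlgebra.imJ_coe, QuaternionAlgebra.imK_coe,
        hNdef] <;>
      ring
  refine ⟨((N⁻¹ : ℚ_[3]) : ℍ[ℚ_[3], -6, 2]) * star x, ?_, ?_⟩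
  · rw [← mul_assoc, ← (QuaternionAlgebra.coe_commute (N⁻¹) x).eq, mul_assoc, hmul,
      ← QuaternionAlgebra.coe_mul, inv_mul_cancel₀ hN, QuaternionAlgebra.coe_one]
  · rw [mul_assoc, hmul', ← QuaternionAlgebra.coe_mul, inv_mul_cancel₀ hN,
      QuaternionAlgebra.coe_one]
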